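/- For any two cardinals s and n with 1 < s ≤ n and n infinite, there exists a group G of cardinality s + n = n and an equation u(x)=1 over G such that exactly s elements of G are solutions and exactly n elements are non-solutions. -/
import Mathlib


def evalWord {G : Type*} [Group G] (w : List (G ⊕ ℤ)) (g : G) : G :=
  (w.map (Sum.elim id (fun k => g ^ k))).prod

universe u

open Cardinal

lemma evalWord_single {G : Type*} [Group G] (k : ℤ) (g : G) :
    evalWord [Sum.inr k] g = g ^ k := by
  simp [evalWord]

lemma pow_eq_one_of_nsmul {X : Type*} [AddCommGroup X] (k : ℕ)
    (h : ∀ x : X, k • x = 0) (a : Multiplicative X) : a ^ k = 1 := by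
  apply Multiplicative.toAdd.injective
  rw [toAdd_pow, toAdd_one]
  exact h _

/-- Key construction lemma: given an abelian group `A` of cardinality `s` of
exponent dividing `k > 0`, the group `A × (free abelian group of rank n)` with
the equation `x ^ k = 1` works. -/
lemma aux (s n : Cardinal.{u}) (hs : 1 < s) (hsn : s ≤ n)
    (hn : Cardinal.aleph0 ≤ n) (A : Type u) [CommGroup A] (k : ℕ) (hk : 0 < k)
    (hA : ∀ a : A, a ^ k = 1) (hmkA : Cardinal.mk A = s) :
    ∃ (G : Type u) (inst : Group G) (w : List (G ⊕ ℤ)),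
      Cardinal.mk G = n ∧
      Cardinal.mk {g : G | @evalWord G inst w g = 1} = s ∧
      Cardinal.mk {g : G | @evalWord G inst w g ≠ 1} = n := by
  classical
  set ι := n.out with hι
  have hmkι : Cardinal.mk ι = n := Cardinal.mk_out n
  haveI : Infinite ι := Cardinal.infinite_iff.mpr (by rw [hmkι]; exact hn)
  set C := Multiplicative (ι →₀ ULift.{u} ℤ) with hC
  have hmkC : Cardinal.mk C = n := by
    show Cardinal.mk (ι →₀ ULift.{u} ℤ) = n
    rw [Cardinal.mk_finsupp_of_infinite, hmkι, Cardinal.mk_uLift,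
      Cardinal.mk_int, Cardinal.lift_aleph0, max_eq_left hn]
  -- elements of C with c ^ k = 1 are exactly 1
  have hCk : ∀ c : C, c ^ k = 1 ↔ c = 1 := by
    intro c
    constructor
    · intro h
      have h2 : k • (Multiplicative.toAdd c) = 0 := by
        rw [← toAdd_pow, h, toAdd_one]
      have h3 : Multiplicative.toAdd c = 0 := by
        ext i
        have h4 := congrArg (fun f => f i) h2
        simp only [Finsupp.coe_smul, Pi.smul_apply, Finsupp.coe_zero,
          Pi.zero_apply] at h4
        have h5 : (k : ℤ) * ((Multiplicative.toAdd c) i).down = 0 := by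
          have := congrArg ULift.down h4
          simpa [nsmul_eq_mul] using this
        have hk' : (k : ℤ) ≠ 0 := by exact_mod_cast hk.ne'
        exact (mul_eq_zero.mp h5).resolve_left hk'
      exact Multiplicative.toAdd.injective (by rw [h3, toAdd_one])
    · rintro rfl; exact one_pow k
  -- the solution set is `{g | g.2 = 1}`
  have hsol : ∀ g : A × C, g ^ k = 1 ↔ g.2 = 1 := by
    intro g
    have hgk : g ^ k = (g.1 ^ k, g.2 ^ k) := rfl
    rw [hgk, Prod.ext_iff]
    simp only [Prod.fst_one, Prod.snd_one, hA g.1, true_and]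
    exact hCk g.2
  refine ⟨A × C, inferInstance, [Sum.inr (k : ℤ)], ?_, ?_, ?_⟩
  · rw [Cardinal.mk_prod, Cardinal.lift_id, Cardinal.lift_id, hmkA, hmkC]
    exact Cardinal.mul_eq_right hn hsn (by positivity)
  · have hset : {g : A × C | evalWord [Sum.inr (k : ℤ)] g = 1} =
        {g : A × C | g.2 = 1} := by
      ext g
      simp only [Set.mem_setOf_eq, evalWord_single, zpow_natCast]
      exact hsol g
    rw [hset]
    have e : {g : A × C | g.2 = 1} ≃ A :=
      { toFun := fun g => g.1.1
        invFun := fun a => ⟨(a, 1), rfl⟩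
        left_inv := by rintro ⟨⟨a, c⟩, (hc : c = 1)⟩; subst hc; rfl
        right_inv := fun a => rfl }
    rw [Cardinal.mk_congr e, hmkA]
  · have hset : {g : A × C | evalWord [Sum.inr (k : ℤ)] g ≠ 1} =
        {g : A × C | g.2 ≠ 1} := by
      ext g
      simp only [Set.mem_setOf_eq, evalWord_single, zpow_natCast, ne_eq]
      exact not_congr (hsol g)
    rw [hset]
    have e : {g : A × C | g.2 ≠ 1} ≃ A × {c : C | c ≠ 1} :=
      { toFun := fun g => (g.1.1, ⟨g.1.2, g.2⟩)
        invFun := fun p => ⟨(p.1, p.2.1), p.2.2⟩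
        left_inv := by rintro ⟨⟨a, c⟩, hc⟩; rfl
        right_inv := fun p => rfl }
    rw [Cardinal.mk_congr e, Cardinal.mk_prod, Cardinal.lift_id,
      Cardinal.lift_id, hmkA]
    haveI : Infinite C := Cardinal.infinite_iff.mpr (by rw [hmkC]; exact hn)
    have h1 : Cardinal.mk {c : C | c ≠ 1} = n := by
      have he : {c : C | c ≠ 1} = ({1} : Set C)ᶜ := by ext c; simp
      rw [he, Cardinal.mk_compl_of_infinite, hmkC]
      rw [hmkC, Cardinal.mk_singleton]
      exact lt_of_lt_of_le Cardinal.one_lt_aleph0 hn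
    rw [h1]
    exact Cardinal.mul_eq_right hn hsn (by positivity)

/-- For cardinals `1 < s ≤ n` with `n` infinite, there is a group of
cardinality `n` and an equation over it with exactly `s` solutions and exactly
`n` non-solutions. -/
theorem stmt12 (s n : Cardinal.{u}) (hs : 1 < s) (hsn : s ≤ n)
    (hn : Cardinal.aleph0 ≤ n) :
    ∃ (G : Type u) (inst : Group G) (w : List (G ⊕ ℤ)),
      Cardinal.mk G = n ∧
      Cardinal.mk {g : G | @evalWord G inst w g = 1} = s ∧
      Cardinal.mk {g : G | @evalWord G inst w g ≠ 1} = n := by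
  rcases lt_or_ge s Cardinal.aleph0 with hfin | hinf
  · -- finite s : use `ZMod m` with `m = s.toNat`, equation `x ^ m = 1`
    set m := s.toNat with hm
    have hsm : (m : Cardinal) = s := Cardinal.cast_toNat_of_lt_aleph0 hfin
    have hm1 : 1 < m := by
      have : (1 : Cardinal) < (m : Cardinal) := by rw [hsm]; exact hs
      exact_mod_cast this
    haveI : NeZero m := ⟨by omega⟩
    refine aux s n hs hsn hn (Multiplicative (ULift.{u} (ZMod m))) m
      (by omega) ?_ ?_
    · apply pow_eq_one_of_nsmul
      intro x
      ext
      show m • x.down = 0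
      rw [nsmul_eq_mul, ZMod.natCast_self, zero_mul]
    · show Cardinal.mk (ULift.{u} (ZMod m)) = s
      rw [Cardinal.mk_uLift, Cardinal.mk_fintype, ZMod.card,
        Cardinal.lift_natCast, hsm]
  · -- infinite s : use `s.out →₀ ULift (ZMod 2)`, equation `x ^ 2 = 1`
    haveI : Infinite s.out := Cardinal.infinite_iff.mpr
      (by rw [Cardinal.mk_out]; exact hinf)
    refine aux s n hs hsn hn
      (Multiplicative (s.out →₀ ULift.{u} (ZMod 2))) 2 (by omega) ?_ ?_
    · apply pow_eq_one_of_nsmul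
      intro f
      ext i
      show ((2 • f) i).down = 0
      rw [Finsupp.smul_apply]
      show (2 : ℕ) • (f i).down = 0
      rw [nsmul_eq_mul, ZMod.natCast_self, zero_mul]
    · show Cardinal.mk (s.out →₀ ULift.{u} (ZMod 2)) = s
      rw [Cardinal.mk_finsupp_of_infinite, Cardinal.mk_out, Cardinal.mk_uLift,
        Cardinal.mk_fintype, ZMod.card, Cardinal.lift_natCast]
      exact max_eq_left ((Cardinal.nat_lt_aleph0 2).le.trans hinf)
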